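/- Let p, r be positive integers and let M, H ∈ ℝ^{(p+r)×(p+r)} be symmetric matrices, with H partitioned as H = [[H₁₁, H₁₂],[H₁₂ᵀ, H₂₂]] where H₁₁ ∈ ℝ^{p×p}, H₁₂ ∈ ℝ^{p×r}, H₂₂ ∈ ℝ^{r×r}. Define S_H := {Z ∈ ℝ^{r×p} : col(I_p, Z)ᵀ H col(I_p, Z) ⪰ 0}. Assume H₂₂ ≺ 0 and S_H ≠ ∅. Then col(I_p, Z)ᵀ M col(I_p, Z) ≻ 0 for all Z ∈ S_H if and only if there exists a scalar α ≥ 0 such that M − αH ≻ 0. -/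

import Mathlib

open Matrix Set
section helpers
variable {n : Type*} [Fintype n]

lemma qf_smul (A : Matrix n n ℝ) (c : ℝ) (x : n → ℝ) :
    (c • x) ⬝ᵥ A *ᵥ (c • x) = c ^ 2 * (x ⬝ᵥ A *ᵥ x) := by
  rw [mulVec_smul, dotProduct_smul, smul_dotProduct]
  simp [smul_eq_mul]; ring

lemma qf_comb (A : Matrix n n ℝ) (a b : ℝ) (x y : n → ℝ) :
    (a • x + b • y) ⬝ᵥ A *ᵥ (a • x + b • y)
      = a ^ 2 * (x ⬝ᵥ A *ᵥ x) + a * b * (x ⬝ᵥ A *ᵥ y) + a * b * (y ⬝ᵥ A *ᵥ x)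
        + b ^ 2 * (y ⬝ᵥ A *ᵥ y) := by
  simp only [mulVec_add, mulVec_smul, dotProduct_add, add_dotProduct, dotProduct_smul,
    smul_dotProduct, smul_eq_mul]
  ring

lemma qf_addM (A B : Matrix n n ℝ) (x : n → ℝ) :
    x ⬝ᵥ (A + B) *ᵥ x = x ⬝ᵥ A *ᵥ x + x ⬝ᵥ B *ᵥ x := by
  rw [add_mulVec, dotProduct_add]

lemma qf_subM (A B : Matrix n n ℝ) (x : n → ℝ) :
    x ⬝ᵥ (A - B) *ᵥ x = x ⬝ᵥ A *ᵥ x - x ⬝ᵥ B *ᵥ x := by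
  rw [sub_mulVec, dotProduct_sub]

lemma qf_smulM (A : Matrix n n ℝ) (c : ℝ) (x : n → ℝ) :
    x ⬝ᵥ (c • A) *ᵥ x = c * (x ⬝ᵥ A *ᵥ x) := by
  rw [smul_mulVec, dotProduct_smul, smul_eq_mul]

lemma qf_one [DecidableEq n] (x : n → ℝ) : x ⬝ᵥ (1 : Matrix n n ℝ) *ᵥ x = x ⬝ᵥ x := by
  rw [one_mulVec]

lemma continuous_qf (A : Matrix n n ℝ) : Continuous fun x : n → ℝ => x ⬝ᵥ A *ᵥ x := by
  simp only [dotProduct, mulVec]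
  exact continuous_finset_sum _ fun i _ => (continuous_apply i).mul
    (continuous_finset_sum _ fun j _ => continuous_const.mul (continuous_apply j))

lemma continuous_dot : Continuous fun x : n → ℝ => x ⬝ᵥ x := by
  simp only [dotProduct]
  exact continuous_finset_sum _ fun i _ => (continuous_apply i).mul (continuous_apply i)

lemma dot_self_pos {x : n → ℝ} (hx : x ≠ 0) : 0 < x ⬝ᵥ x := by
  have h1 : 0 ≤ x ⬝ᵥ x := Finset.sum_nonneg fun i _ => mul_self_nonneg _
  have h2 : x ⬝ᵥ x ≠ 0 := fun h => hx (dotProduct_self_eq_zero.mp h)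
  exact lt_of_le_of_ne h1 (Ne.symm h2)

lemma cross_symm {A : Matrix n n ℝ} (hA : A.IsSymm) (x y : n → ℝ) :
    y ⬝ᵥ A *ᵥ x = x ⬝ᵥ A *ᵥ y := by
  rw [dotProduct_mulVec, ← mulVec_transpose, hA.eq, dotProduct_comm]

lemma qf_congr {m : Type*} [Fintype m] (W : Matrix m n ℝ) (M : Matrix m m ℝ) (x : n → ℝ) :
    x ⬝ᵥ (Wᵀ * M * W) *ᵥ x = (W *ᵥ x) ⬝ᵥ M *ᵥ (W *ᵥ x) := by
  rw [Matrix.mul_assoc, ← mulVec_mulVec, dotProduct_mulVec x, vecMul_transpose, ← mulVec_mulVec]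

lemma vecMulVec_mulVec' {m : Type*} (z : m → ℝ) (x v : n → ℝ) :
    vecMulVec z x *ᵥ v = (x ⬝ᵥ v) • z := by
  ext i
  simp only [mulVec, dotProduct, vecMulVec_apply, Pi.smul_apply, smul_eq_mul, Finset.sum_mul,
    Finset.mul_sum]
  exact Finset.sum_congr rfl fun j _ => by ring

lemma dines_sum (A B : Matrix n n ℝ) (x y : n → ℝ) :
    ∃ z : n → ℝ, z ⬝ᵥ A *ᵥ z = x ⬝ᵥ A *ᵥ x + y ⬝ᵥ A *ᵥ y
      ∧ z ⬝ᵥ B *ᵥ z = x ⬝ᵥ B *ᵥ x + y ⬝ᵥ B *ᵥ y := by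
  obtain ⟨sA, hsA⟩ : ∃ s : ℝ, s = x ⬝ᵥ A *ᵥ x + y ⬝ᵥ A *ᵥ y := ⟨_, rfl⟩
  obtain ⟨sB, hsB⟩ : ∃ s : ℝ, s = x ⬝ᵥ B *ᵥ x + y ⬝ᵥ B *ᵥ y := ⟨_, rfl⟩
  rw [← hsA, ← hsB]
  by_cases h00 : sA = 0 ∧ sB = 0
  · exact ⟨0, by simp [h00.1, h00.2]⟩
  obtain ⟨u, hu⟩ : ∃ u : ℝ → (n → ℝ), ∀ θ, u θ = Real.cos θ • x + Real.sin θ • y :=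
    ⟨_, fun _ => rfl⟩
  obtain ⟨gA, hgA⟩ : ∃ g : ℝ → ℝ, ∀ θ, g θ = (u θ) ⬝ᵥ A *ᵥ (u θ) := ⟨_, fun _ => rfl⟩
  obtain ⟨gB, hgB⟩ : ∃ g : ℝ → ℝ, ∀ θ, g θ = (u θ) ⬝ᵥ B *ᵥ (u θ) := ⟨_, fun _ => rfl⟩
  have hgAv : ∀ θ, gA θ = (Real.cos θ) ^ 2 * (x ⬝ᵥ A *ᵥ x)
      + Real.cos θ * Real.sin θ * (x ⬝ᵥ A *ᵥ y) + Real.cos θ * Real.sin θ * (y ⬝ᵥ A *ᵥ x)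
      + (Real.sin θ) ^ 2 * (y ⬝ᵥ A *ᵥ y) := fun θ => by
    rw [hgA, hu, qf_comb]
  have hgBv : ∀ θ, gB θ = (Real.cos θ) ^ 2 * (x ⬝ᵥ B *ᵥ x)
      + Real.cos θ * Real.sin θ * (x ⬝ᵥ B *ᵥ y) + Real.cos θ * Real.sin θ * (y ⬝ᵥ B *ᵥ x)
      + (Real.sin θ) ^ 2 * (y ⬝ᵥ B *ᵥ y) := fun θ => by
    rw [hgB, hu, qf_comb]
  have hanti : ∀ θ, gA (θ + Real.pi / 2) = sA - gA θ ∧ gB (θ + Real.pi / 2) = sB - gB θ := by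
    intro θ
    have hpyth := Real.sin_sq_add_cos_sq θ
    constructor
    · rw [hgAv, hgAv, Real.cos_add_pi_div_two, Real.sin_add_pi_div_two, hsA]
      linear_combination (x ⬝ᵥ A *ᵥ x + y ⬝ᵥ A *ᵥ y) * hpyth
    · rw [hgBv, hgBv, Real.cos_add_pi_div_two, Real.sin_add_pi_div_two, hsB]
      linear_combination (x ⬝ᵥ B *ᵥ x + y ⬝ᵥ B *ᵥ y) * hpyth
  obtain ⟨h, hh⟩ : ∃ h : ℝ → ℝ, ∀ θ, h θ = -sB * gA θ + sA * gB θ := ⟨_, fun _ => rfl⟩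
  have hcont : Continuous h := by
    have hcu : Continuous u := by
      have : u = fun θ => Real.cos θ • x + Real.sin θ • y := funext hu
      rw [this]
      exact (Real.continuous_cos.smul continuous_const).add
        (Real.continuous_sin.smul continuous_const)
    have hcA : Continuous gA := by
      have : gA = (fun v : n → ℝ => v ⬝ᵥ A *ᵥ v) ∘ u := funext fun θ => hgA θ
      rw [this]; exact (continuous_qf A).comp hcu
    have hcB : Continuous gB := by
      have : gB = (fun v : n → ℝ => v ⬝ᵥ B *ᵥ v) ∘ u := funext fun θ => hgB θ
      rw [this]; exact (continuous_qf B).comp hcu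
    have : h = fun θ => -sB * gA θ + sA * gB θ := funext hh
    rw [this]
    exact (continuous_const.mul hcA).add (continuous_const.mul hcB)
  have hu0 : u 0 = x := by rw [hu]; simp
  have hupi2 : u (Real.pi / 2) = y := by rw [hu]; simp
  have hsum0 : h 0 + h (Real.pi / 2) = 0 := by
    rw [hh, hh, hgA, hgB, hgA, hgB, hu0, hupi2, hsA, hsB]; ring
  have hivt : ∃ θ ∈ Icc (0:ℝ) (Real.pi / 2), h θ = 0 := by
    rcases le_total (h 0) 0 with hle | hle
    · have hsub := intermediate_value_Icc (by positivity : (0:ℝ) ≤ Real.pi / 2)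
        hcont.continuousOn
      have hmem : (0:ℝ) ∈ Icc (h 0) (h (Real.pi / 2)) := ⟨hle, by linarith⟩
      obtain ⟨θ, hθ, hθ0⟩ := hsub hmem
      exact ⟨θ, hθ, hθ0⟩
    · have hsub := intermediate_value_Icc' (by positivity : (0:ℝ) ≤ Real.pi / 2)
        hcont.continuousOn
      have hmem : (0:ℝ) ∈ Icc (h (Real.pi / 2)) (h 0) := ⟨by linarith, hle⟩
      obtain ⟨θ, hθ, hθ0⟩ := hsub hmem
      exact ⟨θ, hθ, hθ0⟩
  obtain ⟨θ, _, hθ0⟩ := hivt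
  have hrel : sA * gB θ = sB * gA θ := by
    have h1 := hh θ
    rw [hθ0] at h1
    linarith
  obtain ⟨t, ht⟩ : ∃ t : ℝ, t = if sA ≠ 0 then gA θ / sA else gB θ / sB := ⟨_, rfl⟩
  have hcol : gA θ = t * sA ∧ gB θ = t * sB := by
    by_cases hsA0 : sA ≠ 0
    · rw [ht, if_pos hsA0]
      refine ⟨by field_simp, ?_⟩
      field_simp
      nlinarith [hrel]
    · push_neg at hsA0
      have hsB0 : sB ≠ 0 := fun hB => h00 ⟨hsA0, hB⟩
      rw [ht, if_neg (by simpa using hsA0)]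
      constructor
      · rw [hsA0, mul_zero]
        rcases mul_eq_zero.mp (by rw [← hrel, hsA0, zero_mul] : sB * gA θ = 0) with h' | h'
        · exact absurd h' hsB0
        · exact h'
      · field_simp
  rcases lt_or_ge 0 t with htpos | htneg
  · refine ⟨Real.sqrt t⁻¹ • u θ, ?_, ?_⟩
    · rw [qf_smul, Real.sq_sqrt (by positivity), ← hgA θ, hcol.1,
        ← mul_assoc, inv_mul_cancel₀ (ne_of_gt htpos), one_mul]
    · rw [qf_smul, Real.sq_sqrt (by positivity), ← hgB θ, hcol.2,
        ← mul_assoc, inv_mul_cancel₀ (ne_of_gt htpos), one_mul]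
  · have h1t : (0:ℝ) < 1 - t := by linarith
    have hA2 : gA (θ + Real.pi / 2) = (1 - t) * sA := by rw [(hanti θ).1, hcol.1]; ring
    have hB2 : gB (θ + Real.pi / 2) = (1 - t) * sB := by rw [(hanti θ).2, hcol.2]; ring
    refine ⟨Real.sqrt (1 - t)⁻¹ • u (θ + Real.pi / 2), ?_, ?_⟩
    · rw [qf_smul, Real.sq_sqrt (by positivity), ← hgA _, hA2,
        ← mul_assoc, inv_mul_cancel₀ (ne_of_gt h1t), one_mul]
    · rw [qf_smul, Real.sq_sqrt (by positivity), ← hgB _, hB2,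
        ← mul_assoc, inv_mul_cancel₀ (ne_of_gt h1t), one_mul]

lemma dines_convex (A B : Matrix n n ℝ) :
    Convex ℝ {w : ℝ × ℝ | ∃ x : n → ℝ, (x ⬝ᵥ A *ᵥ x, x ⬝ᵥ B *ᵥ x) = w} := by
  rintro w1 ⟨x, hx⟩ w2 ⟨y, hy⟩ a b ha hb hab
  obtain ⟨z, hz1, hz2⟩ := dines_sum A B (Real.sqrt a • x) (Real.sqrt b • y)
  refine ⟨z, ?_⟩
  rw [← hx, ← hy]
  have e1 : z ⬝ᵥ A *ᵥ z = a * (x ⬝ᵥ A *ᵥ x) + b * (y ⬝ᵥ A *ᵥ y) := by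
    rw [hz1, qf_smul, qf_smul, Real.sq_sqrt ha, Real.sq_sqrt hb]
  have e2 : z ⬝ᵥ B *ᵥ z = a * (x ⬝ᵥ B *ᵥ x) + b * (y ⬝ᵥ B *ᵥ y) := by
    rw [hz2, qf_smul, qf_smul, Real.sq_sqrt ha, Real.sq_sqrt hb]
  simp [Prod.ext_iff, e1, e2, Prod.smul_mk, smul_eq_mul]

lemma dot_smul_smul (c : ℝ) (x : n → ℝ) : (c • x) ⬝ᵥ (c • x) = c ^ 2 * (x ⬝ᵥ x) := by
  rw [smul_dotProduct, dotProduct_smul]; simp [smul_eq_mul]; ring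

lemma scale_unit {x : n → ℝ} (hx : x ≠ 0) : ∃ c : ℝ, 0 < c ∧ c ^ 2 * (x ⬝ᵥ x) = 1 := by
  have hxx := dot_self_pos hx
  refine ⟨(Real.sqrt (x ⬝ᵥ x))⁻¹, by positivity, ?_⟩
  rw [inv_pow, Real.sq_sqrt hxx.le]
  exact inv_mul_cancel₀ hxx.ne'

lemma slemma_nonstrict {A B : Matrix n n ℝ}
    (hyp : ∀ x : n → ℝ, 0 < x ⬝ᵥ B *ᵥ x → 0 ≤ x ⬝ᵥ A *ᵥ x)
    (slater : ∃ x : n → ℝ, 0 < x ⬝ᵥ B *ᵥ x) :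
    ∃ α : ℝ, 0 ≤ α ∧ ∀ x : n → ℝ, 0 ≤ x ⬝ᵥ (A - α • B) *ᵥ x := by
  have hWconv := dines_convex A B
  have hCconv : Convex ℝ ((Iio (0:ℝ)) ×ˢ (Ioi (0:ℝ))) := (convex_Iio 0).prod (convex_Ioi 0)
  have hCopen : IsOpen ((Iio (0:ℝ)) ×ˢ (Ioi (0:ℝ))) := isOpen_Iio.prod isOpen_Ioi
  have hdisj : Disjoint ((Iio (0:ℝ)) ×ˢ (Ioi (0:ℝ)))
      {w : ℝ × ℝ | ∃ x : n → ℝ, (x ⬝ᵥ A *ᵥ x, x ⬝ᵥ B *ᵥ x) = w} := by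
    rw [Set.disjoint_left]
    rintro w hwC ⟨x, rfl⟩
    exact absurd (hyp x hwC.2) (not_le.mpr hwC.1)
  obtain ⟨f, u, hfC, hfW⟩ := geometric_hahn_banach_open hCconv hCopen hWconv hdisj
  obtain ⟨c, hc⟩ : ∃ c : ℝ, c = f (1, 0) := ⟨_, rfl⟩
  obtain ⟨d, hd⟩ : ∃ d : ℝ, d = f (0, 1) := ⟨_, rfl⟩
  have hf : ∀ a b : ℝ, f (a, b) = a * c + b * d := by
    intro a b
    have he : ((a, b) : ℝ × ℝ) = a • ((1:ℝ), (0:ℝ)) + b • ((0:ℝ), (1:ℝ)) := by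
      simp [Prod.ext_iff]
    rw [he, map_add, f.map_smul, f.map_smul, ← hc, ← hd, smul_eq_mul, smul_eq_mul]
  have hu0 : u ≤ 0 := by
    have h0W : ((0:ℝ), (0:ℝ)) ∈ {w : ℝ × ℝ | ∃ x : n → ℝ, (x ⬝ᵥ A *ᵥ x, x ⬝ᵥ B *ᵥ x) = w} :=
      ⟨0, by simp⟩
    have h1 := hfW _ h0W
    rw [hf] at h1
    linarith
  have hW' : ∀ x : n → ℝ, 0 ≤ c * (x ⬝ᵥ A *ᵥ x) + d * (x ⬝ᵥ B *ᵥ x) := by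
    intro x
    by_contra hneg
    push_neg at hneg
    obtain ⟨lam, hlam⟩ : ∃ l : ℝ,
        l = (1 + |u|) / (-(c * (x ⬝ᵥ A *ᵥ x) + d * (x ⬝ᵥ B *ᵥ x))) := ⟨_, rfl⟩
    have hlampos : 0 < lam := by
      rw [hlam]
      apply div_pos (by positivity) (by linarith)
    have hm := hfW _ ⟨Real.sqrt lam • x, rfl⟩
    rw [qf_smul, qf_smul, Real.sq_sqrt hlampos.le, hf] at hm
    have hkey' : lam * (-(c * (x ⬝ᵥ A *ᵥ x) + d * (x ⬝ᵥ B *ᵥ x))) = 1 + |u| := by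
      rw [hlam]
      exact div_mul_cancel₀ _ (by linarith)
    have hkey : lam * (x ⬝ᵥ A *ᵥ x) * c + lam * (x ⬝ᵥ B *ᵥ x) * d = -(1 + |u|) := by
      linear_combination -hkey'
    have habs := neg_abs_le u
    linarith
  have hd0 : d ≤ 0 := by
    by_contra hdpos
    push_neg at hdpos
    have hb0 : (0:ℝ) < max 1 ((1 + c) / d) := lt_of_lt_of_le one_pos (le_max_left _ _)
    have hmem : ((-1 : ℝ), max 1 ((1 + c) / d)) ∈ (Iio (0:ℝ)) ×ˢ (Ioi (0:ℝ)) :=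
      ⟨by norm_num, hb0⟩
    have h1 := hfC _ hmem
    rw [hf] at h1
    have h2 : (1 + c) / d * d ≤ max 1 ((1 + c) / d) * d :=
      mul_le_mul_of_nonneg_right (le_max_right _ _) hdpos.le
    rw [div_mul_cancel₀ _ hdpos.ne'] at h2
    linarith
  have hc0 : 0 ≤ c := by
    by_contra hcneg
    push_neg at hcneg
    have ha0 : min (-1 : ℝ) ((1 - d) / c) < 0 := lt_of_le_of_lt (min_le_left _ _) (by norm_num)
    have hmem : ((min (-1 : ℝ) ((1 - d) / c)), (1:ℝ)) ∈ (Iio (0:ℝ)) ×ˢ (Ioi (0:ℝ)) :=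
      ⟨ha0, by norm_num⟩
    have h1 := hfC _ hmem
    rw [hf] at h1
    have h2 : (1 - d) / c * c ≤ min (-1 : ℝ) ((1 - d) / c) * c :=
      mul_le_mul_of_nonpos_right (min_le_right _ _) hcneg.le
    rw [div_mul_cancel₀ _ hcneg.ne] at h2
    linarith
  rcases eq_or_lt_of_le hc0 with hceq | hcpos
  · exfalso
    have hmem : ((-1 : ℝ), (1:ℝ)) ∈ (Iio (0:ℝ)) ×ˢ (Ioi (0:ℝ)) := ⟨by norm_num, by norm_num⟩
    have h1 := hfC _ hmem
    rw [hf] at h1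
    have hc' : c = 0 := hceq.symm
    rw [hc'] at h1
    obtain ⟨x0, hx0⟩ := slater
    have h2 := hW' x0
    rw [hc'] at h2
    nlinarith
  · refine ⟨-d / c, div_nonneg (neg_nonneg.mpr hd0) hcpos.le, ?_⟩
    intro x
    rw [qf_subM, qf_smulM]
    have h1 := hW' x
    have he : x ⬝ᵥ A *ᵥ x - -d / c * (x ⬝ᵥ B *ᵥ x)
        = (c * (x ⬝ᵥ A *ᵥ x) + d * (x ⬝ᵥ B *ᵥ x)) / c := by
      field_simp
      ring
    rw [he]
    exact div_nonneg h1 hcpos.le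

lemma exists_min_unit (C : Set (n → ℝ)) (hC : IsClosed C)
    (hne : ∃ x : n → ℝ, x ⬝ᵥ x = 1 ∧ x ∈ C) (A : Matrix n n ℝ) :
    ∃ x : n → ℝ, (x ⬝ᵥ x = 1 ∧ x ∈ C) ∧
      ∀ y : n → ℝ, y ⬝ᵥ y = 1 → y ∈ C → x ⬝ᵥ A *ᵥ x ≤ y ⬝ᵥ A *ᵥ y := by
  have hKclosed : IsClosed ({x : n → ℝ | x ⬝ᵥ x = 1} ∩ C) :=
    (isClosed_eq continuous_dot continuous_const).inter hC
  have hKsub : ({x : n → ℝ | x ⬝ᵥ x = 1} ∩ C) ⊆ Metric.closedBall 0 1 := by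
    rintro x ⟨hx1, -⟩
    rw [Metric.mem_closedBall, dist_zero_right]
    rw [pi_norm_le_iff_of_nonneg zero_le_one]
    intro i
    rw [Real.norm_eq_abs]
    have hterm : x i * x i ≤ 1 := by
      conv_rhs => rw [← hx1]
      exact Finset.single_le_sum (fun j _ => mul_self_nonneg (x j)) (Finset.mem_univ i)
    exact abs_le.mpr ⟨by nlinarith, by nlinarith⟩
  have hK : IsCompact ({x : n → ℝ | x ⬝ᵥ x = 1} ∩ C) :=
    (isCompact_closedBall (0 : n → ℝ) 1).of_isClosed_subset hKclosed hKsub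
  obtain ⟨x0, hx01, hx02⟩ := hne
  obtain ⟨x, hxK, hmin⟩ := hK.exists_isMinOn ⟨x0, hx01, hx02⟩ (continuous_qf A).continuousOn
  exact ⟨x, ⟨hxK.1, hxK.2⟩, fun y h1 h2 => hmin ⟨h1, h2⟩⟩

lemma slemma_strict [DecidableEq n] {A B : Matrix n n ℝ} (hA : A.IsSymm) (hB : B.IsSymm)
    (hyp : ∀ x : n → ℝ, x ≠ 0 → 0 ≤ x ⬝ᵥ B *ᵥ x → 0 < x ⬝ᵥ A *ᵥ x) :
    ∃ α : ℝ, 0 ≤ α ∧ (A - α • B).PosDef := by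
  have hA' : Aᵀ = A := hA
  have hB' : Bᵀ = B := hB
  have hherm : ∀ α : ℝ, (A - α • B).IsHermitian := by
    intro α
    rw [IsHermitian, conjTranspose_eq_transpose_of_trivial, transpose_sub, transpose_smul,
      hA', hB']
  by_cases slater : ∃ x : n → ℝ, 0 < x ⬝ᵥ B *ᵥ x
  · have hCcl : IsClosed {x : n → ℝ | 0 ≤ x ⬝ᵥ B *ᵥ x} :=
      isClosed_le continuous_const (continuous_qf B)
    obtain ⟨x0, hx0⟩ := slater
    have hx0ne : x0 ≠ 0 := by rintro rfl; simp at hx0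
    obtain ⟨c0, hc0pos, hc0sq⟩ := scale_unit hx0ne
    have hne : ∃ x : n → ℝ, x ⬝ᵥ x = 1 ∧ x ∈ {x : n → ℝ | 0 ≤ x ⬝ᵥ B *ᵥ x} := by
      refine ⟨c0 • x0, by rw [dot_smul_smul]; exact hc0sq, ?_⟩
      show 0 ≤ (c0 • x0) ⬝ᵥ B *ᵥ (c0 • x0)
      rw [qf_smul]
      positivity
    obtain ⟨xm, ⟨hxm1, hxmC⟩, hmin⟩ := exists_min_unit _ hCcl hne A
    have hxmne : xm ≠ 0 := by rintro rfl; simp at hxm1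
    have hμpos : 0 < xm ⬝ᵥ A *ᵥ xm := hyp xm hxmne hxmC
    have hyp' : ∀ x : n → ℝ, 0 < x ⬝ᵥ B *ᵥ x →
        0 ≤ x ⬝ᵥ (A - (xm ⬝ᵥ A *ᵥ xm) • (1 : Matrix n n ℝ)) *ᵥ x := by
      intro x hxB
      have hxne : x ≠ 0 := by rintro rfl; simp at hxB
      obtain ⟨c, hcpos, hcsq⟩ := scale_unit hxne
      have h1 : (c • x) ⬝ᵥ (c • x) = 1 := by rw [dot_smul_smul]; exact hcsq
      have h2 : (0:ℝ) ≤ (c • x) ⬝ᵥ B *ᵥ (c • x) := by rw [qf_smul]; positivity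
      have h3 := hmin (c • x) h1 h2
      rw [qf_smul] at h3
      rw [qf_subM, qf_smulM, qf_one]
      have hxx := dot_self_pos hxne
      have hq : c ^ 2 * (x ⬝ᵥ A *ᵥ x) * (x ⬝ᵥ x) = x ⬝ᵥ A *ᵥ x := by
        linear_combination (x ⬝ᵥ A *ᵥ x) * hcsq
      linarith [mul_le_mul_of_nonneg_right h3 hxx.le, hq]
    obtain ⟨α, hα0, hα⟩ := slemma_nonstrict hyp' ⟨x0, hx0⟩
    refine ⟨α, hα0, posDef_iff_dotProduct_mulVec.mpr ⟨hherm α, fun x hx => ?_⟩⟩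
    have h4 := hα x
    rw [qf_subM, qf_subM, qf_smulM, qf_smulM, qf_one] at h4
    show 0 < star x ⬝ᵥ (A - α • B) *ᵥ x
    rw [star_trivial, qf_subM, qf_smulM]
    have hxx := dot_self_pos hx
    nlinarith
  · push_neg at slater
    have hCcl : IsClosed {x : n → ℝ | x ⬝ᵥ A *ᵥ x ≤ 0} :=
      isClosed_le (continuous_qf A) continuous_const
    by_cases hK : ∃ x : n → ℝ, x ⬝ᵥ x = 1 ∧ x ∈ {x : n → ℝ | x ⬝ᵥ A *ᵥ x ≤ 0}
    · obtain ⟨xd, ⟨hxd1, hxdC⟩, hdmin⟩ := exists_min_unit _ hCcl hK (-B)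
      obtain ⟨xm, ⟨hxm1, hxmC⟩, hmmin⟩ := exists_min_unit _ hCcl hK A
      have hqneg : ∀ y : n → ℝ, y ⬝ᵥ (-B) *ᵥ y = -(y ⬝ᵥ B *ᵥ y) := fun y => by
        rw [neg_mulVec, dotProduct_neg]
      have hδpos : 0 < -(xd ⬝ᵥ B *ᵥ xd) := by
        have hxdne : xd ≠ 0 := by rintro rfl; simp at hxd1
        rcases lt_or_eq_of_le (slater xd) with hlt | heq
        · linarith
        · exact absurd (hyp xd hxdne (le_of_eq heq.symm)) (not_lt.mpr hxdC)
      have hm0 : xm ⬝ᵥ A *ᵥ xm ≤ 0 := hxmC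
      obtain ⟨α, hαdef⟩ : ∃ a : ℝ, a = (1 - xm ⬝ᵥ A *ᵥ xm) / (-(xd ⬝ᵥ B *ᵥ xd)) := ⟨_, rfl⟩
      have hα0 : 0 ≤ α := by rw [hαdef]; exact div_nonneg (by linarith) hδpos.le
      have hαδ : α * (-(xd ⬝ᵥ B *ᵥ xd)) = 1 - xm ⬝ᵥ A *ᵥ xm := by
        rw [hαdef]; exact div_mul_cancel₀ _ hδpos.ne'
      have hunit : ∀ v : n → ℝ, v ⬝ᵥ v = 1 → 0 < v ⬝ᵥ A *ᵥ v - α * (v ⬝ᵥ B *ᵥ v) := by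
        intro v hv1
        have hvB := slater v
        rcases le_or_gt (v ⬝ᵥ A *ᵥ v) 0 with hvA | hvA
        · have h1 := hmmin v hv1 hvA
          have h2 := hdmin v hv1 hvA
          simp only [hqneg] at h2
          nlinarith [mul_le_mul_of_nonneg_left h2 hα0]
        · have h3 : 0 ≤ α * (-(v ⬝ᵥ B *ᵥ v)) := mul_nonneg hα0 (by linarith)
          nlinarith
      refine ⟨α, hα0, posDef_iff_dotProduct_mulVec.mpr ⟨hherm α, fun x hx => ?_⟩⟩
      show 0 < star x ⬝ᵥ (A - α • B) *ᵥ x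
      rw [star_trivial, qf_subM, qf_smulM]
      obtain ⟨c, hcpos, hcsq⟩ := scale_unit hx
      have h1 : (c • x) ⬝ᵥ (c • x) = 1 := by rw [dot_smul_smul]; exact hcsq
      have h5 := hunit (c • x) h1
      rw [qf_smul, qf_smul] at h5
      have hc2 : (0:ℝ) < c ^ 2 := by positivity
      nlinarith [h5, hc2]
    · push_neg at hK
      refine ⟨0, le_refl 0, posDef_iff_dotProduct_mulVec.mpr ⟨hherm 0, fun x hx => ?_⟩⟩
      show 0 < star x ⬝ᵥ (A - (0:ℝ) • B) *ᵥ x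
      rw [star_trivial, qf_subM, qf_smulM]
      obtain ⟨c, hcpos, hcsq⟩ := scale_unit hx
      have h1 : (c • x) ⬝ᵥ (c • x) = 1 := by rw [dot_smul_smul]; exact hcsq
      have h2 : 0 < (c • x) ⬝ᵥ A *ᵥ (c • x) := not_le.mp (hK (c • x) h1)
      rw [qf_smul] at h2
      have hc2 : (0:ℝ) < c ^ 2 := by positivity
      nlinarith [h2, hc2]


lemma cs_psd {Q : Matrix n n ℝ} (hQ : Q.IsSymm) (hpsd : ∀ v : n → ℝ, 0 ≤ v ⬝ᵥ Q *ᵥ v)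
    {x : n → ℝ} (hx : 0 < x ⬝ᵥ Q *ᵥ x) (v : n → ℝ) :
    (x ⬝ᵥ Q *ᵥ v) ^ 2 ≤ (x ⬝ᵥ Q *ᵥ x) * (v ⬝ᵥ Q *ᵥ v) := by
  have h := hpsd ((x ⬝ᵥ Q *ᵥ x) • v + (-(x ⬝ᵥ Q *ᵥ v)) • x)
  rw [qf_comb] at h
  rw [cross_symm hQ x v] at h
  nlinarith [h, hx]

lemma herm_congr {m : Type*} [Fintype m] (W : Matrix m n ℝ) {A : Matrix m m ℝ} (hA : Aᵀ = A) :
    (Wᵀ * A * W).IsHermitian := by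
  rw [IsHermitian, conjTranspose_eq_transpose_of_trivial, transpose_mul, transpose_mul,
    transpose_transpose, hA, Matrix.mul_assoc]

end helpers

/-- **Matrix S-lemma.** Let `M, H ∈ ℝ^{(p+r)×(p+r)}` be symmetric, with `H` partitioned so that
its lower-right `r × r` block `H₂₂` is negative definite.  Let
`S_H := {Z ∈ ℝ^{r×p} : col(I, Z)ᵀ H col(I, Z) ⪰ 0}` and assume `S_H ≠ ∅`.  Then
`col(I, Z)ᵀ M col(I, Z) ≻ 0` for all `Z ∈ S_H` iff there exists `α ≥ 0` with `M − αH ≻ 0`. -/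
theorem matrix_S_lemma (p r : ℕ) (hp : 0 < p) (hr : 0 < r)
    (M H : Matrix (Fin p ⊕ Fin r) (Fin p ⊕ Fin r) ℝ)
    (hM : M.IsSymm) (hH : H.IsSymm)
    (hH22 : (-(H.toBlocks₂₂)).PosDef)
    (SH : Set (Matrix (Fin r) (Fin p) ℝ))
    (hSH : SH = {Z : Matrix (Fin r) (Fin p) ℝ |
      ((fromRows (1 : Matrix (Fin p) (Fin p) ℝ) Z)ᵀ * H *
        fromRows (1 : Matrix (Fin p) (Fin p) ℝ) Z).PosSemidef})
    (hne : SH.Nonempty) :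
    (∀ Z ∈ SH, ((fromRows (1 : Matrix (Fin p) (Fin p) ℝ) Z)ᵀ * M *
        fromRows (1 : Matrix (Fin p) (Fin p) ℝ) Z).PosDef)
      ↔ ∃ α : ℝ, 0 ≤ α ∧ (M - α • H).PosDef := by
  have hM' : Mᵀ = M := hM
  have hH' : Hᵀ = H := hH
  have happ : ∀ a b, H b a = H a b := fun a b => by
    have h1 := congrFun (congrFun hH' a) b
    rwa [transpose_apply] at h1
  have hH12 : H.toBlocks₁₂ = (H.toBlocks₂₁)ᵀ := by
    ext i j
    simp only [toBlocks₁₂, toBlocks₂₁, transpose_apply, of_apply]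
    exact (happ _ _).symm
  have hH11symm : (H.toBlocks₁₁)ᵀ = H.toBlocks₁₁ := by
    ext i j
    simp only [toBlocks₁₁, transpose_apply, of_apply]
    exact happ _ _
  have hA22symm : (H.toBlocks₂₂)ᵀ = H.toBlocks₂₂ := by
    ext i j
    simp only [toBlocks₂₂, transpose_apply, of_apply]
    exact happ _ _
  have hTdet : IsUnit (-(H.toBlocks₂₂)).det := isUnit_iff_ne_zero.mpr hH22.det_pos.ne'
  obtain ⟨Zc, hZcdef⟩ : ∃ Zc, Zc = (-(H.toBlocks₂₂))⁻¹ * H.toBlocks₂₁ := ⟨_, rfl⟩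
  have hTZc : (-(H.toBlocks₂₂)) * Zc = H.toBlocks₂₁ := by
    rw [hZcdef, ← Matrix.mul_assoc, Matrix.mul_nonsing_inv _ hTdet, Matrix.one_mul]
  have hA22Zc : H.toBlocks₂₂ * Zc = -H.toBlocks₂₁ := by
    rw [← hTZc, Matrix.neg_mul, neg_neg]
  have hH21 : H.toBlocks₂₁ = -(H.toBlocks₂₂ * Zc) := by rw [hA22Zc, neg_neg]
  have hH21T : (H.toBlocks₂₁)ᵀ = -(Zcᵀ * H.toBlocks₂₂) := by
    rw [hH21, transpose_neg, transpose_mul, hA22symm]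
  -- the fundamental identity
  have expand : ∀ Z : Matrix (Fin r) (Fin p) ℝ,
      (fromRows (1 : Matrix (Fin p) (Fin p) ℝ) Z)ᵀ * H * fromRows (1 : Matrix (Fin p) (Fin p) ℝ) Z
        = H.toBlocks₁₁ + (H.toBlocks₂₁)ᵀ * Z + Zᵀ * H.toBlocks₂₁
          + Zᵀ * H.toBlocks₂₂ * Z := by
    intro Z
    conv_lhs => rw [← fromBlocks_toBlocks H]
    rw [transpose_fromRows, transpose_one, Matrix.mul_assoc, fromBlocks_mul_fromRows,
      fromCols_mul_fromRows, hH12]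
    simp only [Matrix.mul_one, Matrix.one_mul, Matrix.mul_add]
    rw [← Matrix.mul_assoc]
    abel
  have key : ∀ Z : Matrix (Fin r) (Fin p) ℝ,
      (fromRows (1 : Matrix (Fin p) (Fin p) ℝ) Z)ᵀ * H * fromRows (1 : Matrix (Fin p) (Fin p) ℝ) Z
        = (H.toBlocks₁₁ + Zcᵀ * H.toBlocks₂₁)
          + (Z - Zc)ᵀ * H.toBlocks₂₂ * (Z - Zc) := by
    intro Z
    rw [expand Z, transpose_sub, hH21T, hH21]
    simp only [Matrix.sub_mul, Matrix.mul_sub, Matrix.neg_mul, Matrix.mul_neg, Matrix.mul_assoc]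
    abel
  have hQsymm : (H.toBlocks₁₁ + Zcᵀ * H.toBlocks₂₁).IsSymm := by
    show (H.toBlocks₁₁ + Zcᵀ * H.toBlocks₂₁)ᵀ = _
    rw [transpose_add, hH11symm, transpose_mul, transpose_transpose, hH21T, hH21]
    simp only [Matrix.neg_mul, Matrix.mul_neg, Matrix.mul_assoc]
  -- Q is PSD
  obtain ⟨Z0, hZ0⟩ := hne
  have hZ0psd : ((fromRows (1 : Matrix (Fin p) (Fin p) ℝ) Z0)ᵀ * H *
      fromRows (1 : Matrix (Fin p) (Fin p) ℝ) Z0).PosSemidef := by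
    rw [hSH] at hZ0; exact hZ0
  have hQpsd : ∀ v : Fin p → ℝ,
      0 ≤ v ⬝ᵥ (H.toBlocks₁₁ + Zcᵀ * H.toBlocks₂₁) *ᵥ v := by
    intro v
    have h1 := PosSemidef.dotProduct_mulVec_nonneg hZ0psd v
    rw [star_trivial, key Z0, qf_addM, qf_congr] at h1
    have h2 := PosSemidef.dotProduct_mulVec_nonneg hH22.posSemidef ((Z0 - Zc) *ᵥ v)
    rw [star_trivial, neg_mulVec, dotProduct_neg] at h2
    linarith
  constructor
  · -- forward direction
    intro hall
    apply slemma_strict hM hH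
    intro ξ hξ hξH
    obtain ⟨x, hxdef⟩ : ∃ x, x = ξ ∘ Sum.inl := ⟨_, rfl⟩
    obtain ⟨z, hzdef⟩ : ∃ z, z = ξ ∘ Sum.inr := ⟨_, rfl⟩
    have hxz : ξ = Sum.elim x z := by
      funext i
      cases i with
      | inl i => rw [hxdef]; rfl
      | inr i => rw [hzdef]; rfl
    by_cases hx : x = 0
    · -- then z ≠ 0 and ξᵀHξ < 0, contradiction
      exfalso
      have hz : z ≠ 0 := by
        intro hz0
        apply hξ
        rw [hxz, hx, hz0]
        funext i
        cases i <;> rfl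
      have hcalc : ξ ⬝ᵥ H *ᵥ ξ = z ⬝ᵥ H.toBlocks₂₂ *ᵥ z := by
        rw [hxz, hx]
        conv_lhs => rw [← fromBlocks_toBlocks H]
        rw [fromBlocks_mulVec, sumElim_dotProduct_sumElim]
        simp [Sum.elim_comp_inl, Sum.elim_comp_inr]
      have h3 := PosDef.dotProduct_mulVec_pos hH22 hz
      rw [star_trivial, neg_mulVec, dotProduct_neg] at h3
      rw [hcalc] at hξH
      linarith
    · -- x ≠ 0
      suffices hgood : ∃ Z', Z' ∈ SH ∧ Z' *ᵥ x = z by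
        obtain ⟨Z', hmem, hZ'x⟩ := hgood
        have hxi2 : ξ = fromRows (1 : Matrix (Fin p) (Fin p) ℝ) Z' *ᵥ x := by
          rw [fromRows_mulVec, one_mulVec, hZ'x]; exact hxz
        have hpd := hall Z' hmem
        have h4 := PosDef.dotProduct_mulVec_pos hpd hx
        rw [star_trivial, qf_congr, ← hxi2] at h4
        exact h4
      -- the constraint in terms of x, z
      have hcx : 0 < x ⬝ᵥ x := dot_self_pos hx
      obtain ⟨Zt, hZtdef⟩ : ∃ Zt : Matrix (Fin r) (Fin p) ℝ,
          Zt = (x ⬝ᵥ x)⁻¹ • vecMulVec z x := ⟨_, rfl⟩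
      have hZtx : Zt *ᵥ x = z := by
        rw [hZtdef, smul_mulVec, vecMulVec_mulVec', smul_smul,
          inv_mul_cancel₀ hcx.ne', one_smul]
      have hxi : ξ = fromRows (1 : Matrix (Fin p) (Fin p) ℝ) Zt *ᵥ x := by
        rw [fromRows_mulVec, one_mulVec, hZtx]; exact hxz
      obtain ⟨w, hwdef⟩ : ∃ w, w = z - Zc *ᵥ x := ⟨_, rfl⟩
      have hDtx : (Zt - Zc) *ᵥ x = w := by
        rw [sub_mulVec, hZtx, hwdef]
      have hcon : ξ ⬝ᵥ H *ᵥ ξ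
          = x ⬝ᵥ (H.toBlocks₁₁ + Zcᵀ * H.toBlocks₂₁) *ᵥ x + w ⬝ᵥ H.toBlocks₂₂ *ᵥ w := by
        rw [hxi, ← qf_congr, key Zt, qf_addM, qf_congr, hDtx]
      rw [hcon] at hξH
      -- wTw := w ⬝ᵥ (−A22) w
      have hwT : -(w ⬝ᵥ H.toBlocks₂₂ *ᵥ w)
          ≤ x ⬝ᵥ (H.toBlocks₁₁ + Zcᵀ * H.toBlocks₂₁) *ᵥ x := by linarith
      have hwTnn : 0 ≤ -(w ⬝ᵥ H.toBlocks₂₂ *ᵥ w) := by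
        have h5 := PosSemidef.dotProduct_mulVec_nonneg hH22.posSemidef w
        rw [star_trivial, neg_mulVec, dotProduct_neg] at h5
        linarith
      rcases lt_or_eq_of_le (hQpsd x) with hq | hq
      · -- positive case: rank-one update
        obtain ⟨Δ, hΔdef⟩ : ∃ D : Matrix (Fin r) (Fin p) ℝ,
            D = (x ⬝ᵥ (H.toBlocks₁₁ + Zcᵀ * H.toBlocks₂₁) *ᵥ x)⁻¹ •
              vecMulVec w ((H.toBlocks₁₁ + Zcᵀ * H.toBlocks₂₁) *ᵥ x) := ⟨_, rfl⟩
        have hΔx : Δ *ᵥ x = w := by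
          rw [hΔdef, smul_mulVec, vecMulVec_mulVec',
            dotProduct_comm ((H.toBlocks₁₁ + Zcᵀ * H.toBlocks₂₁) *ᵥ x) x, smul_smul,
            inv_mul_cancel₀ hq.ne', one_smul]
        refine ⟨Zc + Δ, ?_, ?_⟩
        · rw [hSH]
          refine posSemidef_iff_dotProduct_mulVec.mpr ⟨herm_congr _ hH', fun v => ?_⟩
          rw [star_trivial, key (Zc + Δ), add_sub_cancel_left, qf_addM, qf_congr]
          have hΔv : Δ *ᵥ v = ((x ⬝ᵥ (H.toBlocks₁₁ + Zcᵀ * H.toBlocks₂₁) *ᵥ x)⁻¹ *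
              (((H.toBlocks₁₁ + Zcᵀ * H.toBlocks₂₁) *ᵥ x) ⬝ᵥ v)) • w := by
            rw [hΔdef, smul_mulVec, vecMulVec_mulVec', smul_smul]
          rw [hΔv, qf_smul]
          -- abbreviations via obtain
          have hβ : ((H.toBlocks₁₁ + Zcᵀ * H.toBlocks₂₁) *ᵥ x) ⬝ᵥ v
              = x ⬝ᵥ (H.toBlocks₁₁ + Zcᵀ * H.toBlocks₂₁) *ᵥ v := by
            rw [dotProduct_comm]
            exact cross_symm hQsymm x v
          rw [hβ]
          have hCS := cs_psd hQsymm hQpsd hq v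
          have hQv := hQpsd v
          have h8 : (x ⬝ᵥ (H.toBlocks₁₁ + Zcᵀ * H.toBlocks₂₁) *ᵥ v) ^ 2
                * (-(w ⬝ᵥ H.toBlocks₂₂ *ᵥ w))
              ≤ ((x ⬝ᵥ (H.toBlocks₁₁ + Zcᵀ * H.toBlocks₂₁) *ᵥ x)
                * (v ⬝ᵥ (H.toBlocks₁₁ + Zcᵀ * H.toBlocks₂₁) *ᵥ v))
                * (x ⬝ᵥ (H.toBlocks₁₁ + Zcᵀ * H.toBlocks₂₁) *ᵥ x) :=
            le_trans (mul_le_mul_of_nonneg_right hCS hwTnn)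
              (mul_le_mul_of_nonneg_left hwT (mul_nonneg hq.le hQv))
          have h10 := mul_le_mul_of_nonneg_right h8
            (by positivity : (0:ℝ) ≤ ((x ⬝ᵥ (H.toBlocks₁₁ + Zcᵀ * H.toBlocks₂₁) *ᵥ x)⁻¹) ^ 2)
          have h11 : ((x ⬝ᵥ (H.toBlocks₁₁ + Zcᵀ * H.toBlocks₂₁) *ᵥ x)
                * (v ⬝ᵥ (H.toBlocks₁₁ + Zcᵀ * H.toBlocks₂₁) *ᵥ v)
                * (x ⬝ᵥ (H.toBlocks₁₁ + Zcᵀ * H.toBlocks₂₁) *ᵥ x))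
                * ((x ⬝ᵥ (H.toBlocks₁₁ + Zcᵀ * H.toBlocks₂₁) *ᵥ x)⁻¹) ^ 2
              = v ⬝ᵥ (H.toBlocks₁₁ + Zcᵀ * H.toBlocks₂₁) *ᵥ v := by
            field_simp
          nlinarith [h10, h11]
        · rw [add_mulVec, hΔx, hwdef]
          funext i
          simp
      · -- qQ x = 0 : then w = 0 and Z' = Zc works
        have hw0 : w = 0 := by
          by_contra hwne
          have h6 := PosDef.dotProduct_mulVec_pos hH22 hwne
          rw [star_trivial, neg_mulVec, dotProduct_neg] at h6
          rw [← hq] at hwT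
          linarith
        refine ⟨Zc, ?_, ?_⟩
        · rw [hSH]
          refine posSemidef_iff_dotProduct_mulVec.mpr ⟨herm_congr _ hH', fun v => ?_⟩
          rw [star_trivial, key Zc, sub_self, transpose_zero, Matrix.zero_mul,
            Matrix.mul_zero, add_zero]
          exact hQpsd v
        · rw [hwdef] at hw0
          have := sub_eq_zero.mp hw0
          rw [← this]
  · -- backward direction
    rintro ⟨α, hα0, hpd⟩ Z hZ
    rw [hSH] at hZ
    refine posDef_iff_dotProduct_mulVec.mpr ⟨herm_congr _ hM', fun x hx => ?_⟩
    rw [star_trivial, qf_congr]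
    have hWx : fromRows (1 : Matrix (Fin p) (Fin p) ℝ) Z *ᵥ x ≠ 0 := by
      rw [fromRows_mulVec, one_mulVec]
      intro hcontra
      apply hx
      funext i
      have h7 := congrFun hcontra (Sum.inl i)
      simpa using h7
    have h1 := PosDef.dotProduct_mulVec_pos hpd hWx
    rw [star_trivial, qf_subM, qf_smulM] at h1
    have h2 := PosSemidef.dotProduct_mulVec_nonneg hZ x
    rw [star_trivial, qf_congr] at h2
    linarith [mul_nonneg hα0 h2]
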